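/- arXiv:2305.06730 — 4 statements merged into one kernel-verified Lean document; each statement's English description precedes it below -/
import Mathlib

section
/- The set of (n+2)×(n+2) real matrices of the form [[R, 0, a], [vᵀR, 1, s + (1/2)vᵀa], [0ᵀ, 0, 1]] with R ∈ SO(n), v, a ∈ ℝⁿ, s ∈ ℝ is closed under matrix multiplication; explicitly the product of the elements with data (R₁, v₁, a₁, s₁) and (R₂, v₂, a₂, s₂) has data R₃ = R₁R₂, v₃ = v₁ + R₁v₂, a₃ = a₁ + R₁a₂, s₃ = s₁ + s₂ + (1/2)v₁ᵀR₁a₂ − (1/2)a₁ᵀR₁v₂. -/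
open Matrix

/-- The matrix `[[R, 0, a], [vᵀR, 1, s + (1/2)vᵀa], [0ᵀ, 0, 1]]` realising a Carroll group
element with data `(R, v, a, s)` inside the `(n+2)×(n+2)` matrices. -/
noncomputable def carrollMat {n : ℕ} (R : Matrix (Fin n) (Fin n) ℝ) (v a : Fin n → ℝ) (s : ℝ) :
    Matrix (Fin n ⊕ Fin 2) (Fin n ⊕ Fin 2) ℝ :=
  fun i j =>
    match i, j with
    | .inl i, .inl j => R i j
    | .inl i, .inr j => if j = 1 then a i else 0
    | .inr i, .inl j => if i = 0 then Matrix.vecMul v R j else 0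
    | .inr i, .inr j =>
        if i = 0 then (if j = 0 then 1 else s + (1 / 2) * (v ⬝ᵥ a))
        else (if j = 0 then 0 else 1)

/-- The Carroll matrices are closed under multiplication, with the stated group law. -/
theorem carrollMat_mul {n : ℕ} (R₁ R₂ : Matrix (Fin n) (Fin n) ℝ)
    (hR₁ : R₁ᵀ * R₁ = 1) (hdet₁ : R₁.det = 1)
    (hR₂ : R₂ᵀ * R₂ = 1) (hdet₂ : R₂.det = 1)
    (v₁ v₂ a₁ a₂ : Fin n → ℝ) (s₁ s₂ : ℝ) :
    carrollMat R₁ v₁ a₁ s₁ * carrollMat R₂ v₂ a₂ s₂ =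
      carrollMat (R₁ * R₂) (v₁ + R₁ *ᵥ v₂) (a₁ + R₁ *ᵥ a₂)
        (s₁ + s₂ + (1 / 2) * (Matrix.vecMul v₁ R₁ ⬝ᵥ a₂)
          - (1 / 2) * (Matrix.vecMul a₁ R₁ ⬝ᵥ v₂)) := by
  have key : ∀ x : Fin n → ℝ, Matrix.vecMul (R₁ *ᵥ x) R₁ = x := by
    intro x
    rw [← Matrix.vecMul_transpose, Matrix.vecMul_vecMul, hR₁, Matrix.vecMul_one]
  ext i j
  rcases i with i | i <;> rcases j with j | j
  · simp [carrollMat, Matrix.mul_apply, Fintype.sum_sum_type, Fin.sum_univ_two]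
  · fin_cases j <;>
      simp [carrollMat, Matrix.mul_apply, Fintype.sum_sum_type, Fin.sum_univ_two,
        Matrix.mulVec, dotProduct, add_comm]
  · have hv : (v₁ + R₁ *ᵥ v₂) ᵥ* (R₁ * R₂) = (v₁ ᵥ* R₁) ᵥ* R₂ + v₂ ᵥ* R₂ := by
      rw [Matrix.add_vecMul, ← Matrix.vecMul_vecMul, ← Matrix.vecMul_vecMul, key]
    fin_cases i
    · simp only [carrollMat, Matrix.mul_apply, Fintype.sum_sum_type, Fin.sum_univ_two]
      simp only [if_true, if_pos rfl]
      norm_num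
      exact (congrFun hv j).symm
    · simp [carrollMat, Matrix.mul_apply, Fintype.sum_sum_type, Fin.sum_univ_two]
  · fin_cases i <;> fin_cases j <;>
      simp [carrollMat, Matrix.mul_apply, Fintype.sum_sum_type, Fin.sum_univ_two]
    · have h1 : (R₁ *ᵥ v₂) ⬝ᵥ (R₁ *ᵥ a₂) = v₂ ⬝ᵥ a₂ := by
        rw [Matrix.dotProduct_mulVec, key]
      have h2 : v₁ ⬝ᵥ (R₁ *ᵥ a₂) = Matrix.vecMul v₁ R₁ ⬝ᵥ a₂ :=
        Matrix.dotProduct_mulVec _ _ _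
      have h3 : (R₁ *ᵥ v₂) ⬝ᵥ a₁ = Matrix.vecMul a₁ R₁ ⬝ᵥ v₂ := by
        rw [dotProduct_comm, Matrix.dotProduct_mulVec]
      replace h1 := h1; replace h2 := h2; replace h3 := h3
      simp [dotProduct, Matrix.mulVec] at h1 h2 h3
      simp [dotProduct, Matrix.mulVec]
      linarith [h1, h2, h3]
end

section
/- Under the coadjoint action of the Carroll group, the vector E j + p × k transforms by the rotation R: if (j', k', p', E) = Ad*_{(R,v,a,s)}(j, k, p, E), then E j' + p' × k' = R(E j + p × k). Consequently the quartic Casimir W²(α) = ‖E j + p × k‖² is constant on coadjoint orbits. -/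
open Matrix

lemma cross_mulVec_adj (A : Matrix (Fin 3) (Fin 3) ℝ) (x y : Fin 3 → ℝ) :
    (A *ᵥ x) ⨯₃ (A *ᵥ y) = (adjugate Aᵀ) *ᵥ (x ⨯₃ y) := by
  funext i
  fin_cases i <;>
    simp [cross_apply, mulVec, dotProduct, adjugate_fin_three, Fin.sum_univ_three] <;> ring

lemma adj_transpose_eq (R : Matrix (Fin 3) (Fin 3) ℝ) (hR : Rᵀ * R = 1) (hdet : R.det = 1) :
    adjugate Rᵀ = R := by
  have h2 : adjugate Rᵀ * Rᵀ = 1 := by rw [adjugate_mul, det_transpose, hdet, one_smul]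
  calc adjugate Rᵀ = adjugate Rᵀ * (Rᵀ * R) := by rw [hR, mul_one]
    _ = (adjugate Rᵀ * Rᵀ) * R := by rw [mul_assoc]
    _ = R := by rw [h2, one_mul]

/-- The coadjoint action of the Carroll group element `(R, v, a, s)` on a covector
`α = (j, k, p, E)`:  `j' = Rj + v × Rk + a × Rp + E v × a`, `k' = Rk + Ea`,
`p' = Rp − Ev`, `E' = E`. -/
def coadj (R : Matrix (Fin 3) (Fin 3) ℝ) (v a : Fin 3 → ℝ) (s : ℝ)
    (α : (Fin 3 → ℝ) × (Fin 3 → ℝ) × (Fin 3 → ℝ) × ℝ) :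
    (Fin 3 → ℝ) × (Fin 3 → ℝ) × (Fin 3 → ℝ) × ℝ :=
  ⟨R *ᵥ α.1 + v ⨯₃ (R *ᵥ α.2.1) + a ⨯₃ (R *ᵥ α.2.2.1) + α.2.2.2 • (v ⨯₃ a),
   R *ᵥ α.2.1 + α.2.2.2 • a,
   R *ᵥ α.2.2.1 - α.2.2.2 • v,
   α.2.2.2⟩

/-- Under the coadjoint action, `E j + p × k` transforms by the rotation `R`; hence the
quartic Casimir `W² = ‖E j + p × k‖²` is constant on coadjoint orbits. -/
theorem coadj_casimir (R : Matrix (Fin 3) (Fin 3) ℝ)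
    (hR : Rᵀ * R = 1) (hdet : R.det = 1) (v a : Fin 3 → ℝ) (s : ℝ)
    (j k p j' k' p' : Fin 3 → ℝ) (E : ℝ)
    (h : coadj R v a s (j, k, p, E) = (j', k', p', E)) :
    E • j' + p' ⨯₃ k' = R *ᵥ (E • j + p ⨯₃ k) ∧
    (E • j' + p' ⨯₃ k') ⬝ᵥ (E • j' + p' ⨯₃ k') =
      (E • j + p ⨯₃ k) ⬝ᵥ (E • j + p ⨯₃ k) := by
  simp only [coadj, Prod.mk.injEq] at h
  obtain ⟨h1, h2, h3, -⟩ := h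
  subst h1 h2 h3
  have key : (R *ᵥ p) ⨯₃ (R *ᵥ k) = R *ᵥ (p ⨯₃ k) := by
    rw [cross_mulVec_adj, adj_transpose_eq R hR hdet]
  have h4 : (R *ᵥ p) ⨯₃ a = -(a ⨯₃ (R *ᵥ p)) := (cross_anticomm _ _).symm
  have main : E • (R *ᵥ j + v ⨯₃ (R *ᵥ k) + a ⨯₃ (R *ᵥ p) + E • (v ⨯₃ a)) +
      (R *ᵥ p - E • v) ⨯₃ (R *ᵥ k + E • a) = R *ᵥ (E • j + p ⨯₃ k) := by
    simp only [map_add, map_sub, _root_.map_smul, LinearMap.map_smul₂, LinearMap.add_apply,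
      LinearMap.sub_apply, LinearMap.smul_apply, key, mulVec_add, mulVec_smul, h4]
    module
  refine ⟨main, ?_⟩
  rw [main]
  have : ∀ w : Fin 3 → ℝ, (R *ᵥ w) ⬝ᵥ (R *ᵥ w) = w ⬝ᵥ w := by
    intro w
    rw [dotProduct_mulVec, ← mulVec_transpose, mulVec_mulVec, hR]
    simp
  exact this _
end

section
/- If E = 0 and p × k ≠ 0, then for any j ∈ ℝ³ there exist v, a ∈ ℝ³ such that j + a × p + v × k = 0; i.e. generic massless Carroll covectors can be brought to vanishing angular momentum by boosts and translations. -/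
open Matrix

set_option maxHeartbeats 1000000 in
/-- If `E = 0` and `p × k ≠ 0`, any angular momentum `j` can be cancelled by a suitable
boost `v` and translation `a`: the map `(a, v) ↦ a × p + v × k` is onto `ℝ³`. -/
theorem generic_massless_j_zero (p k j : Fin 3 → ℝ) (h : p ⨯₃ k ≠ 0) :
    ∃ v a : Fin 3 → ℝ, j + a ⨯₃ p + v ⨯₃ k = 0 := by
  obtain ⟨p0, p1, p2, hp⟩ : ∃ a b c, p = ![a, b, c] :=
    ⟨p 0, p 1, p 2, by funext i; fin_cases i <;> simp⟩
  obtain ⟨k0, k1, k2, hk⟩ : ∃ a b c, k = ![a, b, c] :=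
    ⟨k 0, k 1, k 2, by funext i; fin_cases i <;> simp⟩
  obtain ⟨j0, j1, j2, hj⟩ : ∃ a b c, j = ![a, b, c] :=
    ⟨j 0, j 1, j 2, by funext i; fin_cases i <;> simp⟩
  subst hp hk hj
  set c0 : ℝ := p1 * k2 - p2 * k1 with hc0
  set c1 : ℝ := p2 * k0 - p0 * k2 with hc1
  set c2 : ℝ := p0 * k1 - p1 * k0 with hc2
  set d : ℝ := c0 ^ 2 + c1 ^ 2 + c2 ^ 2 with hdd
  have hd : d ≠ 0 := by
    intro hd0
    apply h
    have h0 : c0 = 0 := by nlinarith [sq_nonneg c0, sq_nonneg c1, sq_nonneg c2]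
    have h1 : c1 = 0 := by nlinarith [sq_nonneg c0, sq_nonneg c1, sq_nonneg c2]
    have h2 : c2 = 0 := by nlinarith [sq_nonneg c0, sq_nonneg c1, sq_nonneg c2]
    funext i
    fin_cases i <;> simp [crossProduct] <;> linarith
  set t : ℝ := (d * d)⁻¹ with htt
  have ht : t * (d * d) = 1 := inv_mul_cancel₀ (mul_ne_zero hd hd)
  set jc : ℝ := j0 * c0 + j1 * c1 + j2 * c2 with hjc
  set cp0 : ℝ := c1 * p2 - c2 * p1 with hcp0
  set cp1 : ℝ := c2 * p0 - c0 * p2 with hcp1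
  set cp2 : ℝ := c0 * p1 - c1 * p0 with hcp2
  set ck0 : ℝ := c1 * k2 - c2 * k1 with hck0
  set ck1 : ℝ := c2 * k0 - c0 * k2 with hck1
  set ck2 : ℝ := c0 * k1 - c1 * k0 with hck2
  set jcp : ℝ := j0 * cp0 + j1 * cp1 + j2 * cp2 with hjcp
  set jck : ℝ := j0 * ck0 + j1 * ck1 + j2 * ck2 with hjck
  set kk : ℝ := k0 ^ 2 + k1 ^ 2 + k2 ^ 2 with hkk
  set pp : ℝ := p0 ^ 2 + p1 ^ 2 + p2 ^ 2 with hpp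
  set pk : ℝ := p0 * k0 + p1 * k1 + p2 * k2 with hpk
  set y1 : ℝ := -jc * d * t with hy1
  set x2 : ℝ := (-jcp * kk + jck * pk) * t with hx2
  set y2 : ℝ := (-jck * pp + jcp * pk) * t with hy2
  refine ⟨![y1 * p0 + y2 * c0, y1 * p1 + y2 * c1, y1 * p2 + y2 * c2],
          ![x2 * c0, x2 * c1, x2 * c2], ?_⟩
  funext i
  fin_cases i
  · show j0 + (x2 * c1 * p2 - x2 * c2 * p1)
        + ((y1 * p1 + y2 * c1) * k2 - (y1 * p2 + y2 * c2) * k1) = 0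
    simp only [hy1, hx2, hy2, hjc, hjcp, hjck, hkk, hpp, hpk,
      hcp0, hcp1, hcp2, hck0, hck1, hck2, hc0, hc1, hc2, hdd]
    linear_combination (-j0) * ht
  · show j1 + (x2 * c2 * p0 - x2 * c0 * p2)
        + ((y1 * p2 + y2 * c2) * k0 - (y1 * p0 + y2 * c0) * k2) = 0
    simp only [hy1, hx2, hy2, hjc, hjcp, hjck, hkk, hpp, hpk,
      hcp0, hcp1, hcp2, hck0, hck1, hck2, hc0, hc1, hc2, hdd]
    linear_combination (-j1) * ht
  · show j2 + (x2 * c0 * p1 - x2 * c1 * p0)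
        + ((y1 * p0 + y2 * c0) * k1 - (y1 * p1 + y2 * c1) * k0) = 0
    simp only [hy1, hx2, hy2, hjc, hjcp, hjck, hkk, hpp, hpk,
      hcp0, hcp1, hcp2, hck0, hck1, hck2, hc0, hc1, hc2, hdd]
    linear_combination (-j2) * ht
end

section
/- For each matrix [[a, b], [c, d]] ∈ GL(2, ℝ), the linear map on the Carroll Lie algebra defined by J_{ab} ↦ J_{ab}, B_i ↦ a B_i + b P_i, P_i ↦ c B_i + d P_i, H ↦ (ad − bc) H is a Lie algebra automorphism of the Carroll algebra. -/
open Matrix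

/-- An element of the (3+1)-dimensional Carroll Lie algebra, written as
`(X, β, π, h)` with `X` the (skew-symmetric) rotation part `½ X^{ab} J_{ab}`,
`β` the boost part `β·B`, `π` the translation part `π·P` and `h` the coefficient of `H`. -/
abbrev CarrollElt := Matrix (Fin 3) (Fin 3) ℝ × (Fin 3 → ℝ) × (Fin 3 → ℝ) × ℝ

/-- The Carroll Lie bracket, encoding the structure constants
`[J,J] = J`, `[J,B] = B`, `[J,P] = P`, `[B_a, P_b] = δ_{ab} H`. -/
def carrollBracket (A B : CarrollElt) : CarrollElt :=
  ⟨A.1 * B.1 - B.1 * A.1,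
   A.1 *ᵥ B.2.1 - B.1 *ᵥ A.2.1,
   A.1 *ᵥ B.2.2.1 - B.1 *ᵥ A.2.2.1,
   A.2.1 ⬝ᵥ B.2.2.1 - B.2.1 ⬝ᵥ A.2.2.1⟩

/-- The linear map determined by `J ↦ J`, `B ↦ a B + b P`, `P ↦ c B + d P`,
`H ↦ (ad − bc) H`. -/
def phiGL (a b c d : ℝ) (A : CarrollElt) : CarrollElt :=
  ⟨A.1, a • A.2.1 + c • A.2.2.1, b • A.2.1 + d • A.2.2.1, (a * d - b * c) * A.2.2.2⟩

lemma phiGL_comp (a b c d a' b' c' d' : ℝ) (A : CarrollElt) :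
    phiGL a b c d (phiGL a' b' c' d' A) =
      phiGL (a * a' + c * b') (b * a' + d * b') (a * c' + c * d') (b * c' + d * d') A := by
  simp only [phiGL, Prod.mk.injEq]
  refine ⟨trivial, ?_, ?_, by ring⟩ <;> funext i <;>
    simp [Pi.add_apply, Pi.smul_apply, smul_eq_mul] <;> ring

/-- For `[[a,b],[c,d]] ∈ GL(2,ℝ)`, the map `phiGL a b c d` is a Lie algebra automorphism
of the Carroll algebra: it is linear, bijective, and preserves the bracket. -/
theorem phiGL_isAutomorphism (a b c d : ℝ) (h : a * d - b * c ≠ 0) :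
    IsLinearMap ℝ (phiGL a b c d) ∧
    Function.Bijective (phiGL a b c d) ∧
    (∀ A : CarrollElt, A.1ᵀ = -A.1 → (phiGL a b c d A).1ᵀ = -(phiGL a b c d A).1) ∧
    ∀ A B : CarrollElt, A.1ᵀ = -A.1 → B.1ᵀ = -B.1 →
      phiGL a b c d (carrollBracket A B) =
        carrollBracket (phiGL a b c d A) (phiGL a b c d B) := by
  set Δ := a * d - b * c with hΔ
  refine ⟨⟨?_, ?_⟩, ?_, ?_, ?_⟩
  · intro A B
    simp only [phiGL, Prod.ext_iff, Prod.fst_add, Prod.snd_add]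
    refine ⟨trivial, ?_, ?_, by ring⟩ <;> funext i <;>
      simp [Pi.add_apply, Pi.smul_apply, smul_eq_mul] <;> ring
  · intro r A
    simp only [phiGL, Prod.ext_iff, Prod.smul_fst, Prod.smul_snd, smul_eq_mul]
    refine ⟨trivial, ?_, ?_, by ring⟩ <;> funext i <;>
      simp [Pi.add_apply, Pi.smul_apply, smul_eq_mul] <;> ring
  · rw [Function.bijective_iff_has_inverse]
    refine ⟨phiGL (d / Δ) (-b / Δ) (-c / Δ) (a / Δ), ?_, ?_⟩ <;> intro A <;>
      rw [phiGL_comp] <;>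
      · simp only [phiGL]
        have : ∀ x y : Fin 3 → ℝ, (1 : ℝ) • x + (0 : ℝ) • y = x := by
          intro x y; simp
        ext <;> simp <;> field_simp <;> ring_nf <;> rw [hΔ] <;> ring
  · intro A hA
    exact hA
  · intro A B hA hB
    simp only [phiGL, carrollBracket, Prod.mk.injEq]
    refine ⟨trivial, ?_, ?_, ?_⟩
    · funext i
      simp [mulVec_add, mulVec_smul, Pi.add_apply, Pi.smul_apply, smul_eq_mul]
      ring
    · funext i
      simp [mulVec_add, mulVec_smul, Pi.add_apply, Pi.smul_apply, smul_eq_mul]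
      ring
    · simp [dotProduct_add, add_dotProduct, dotProduct_smul, smul_dotProduct, smul_eq_mul]
      rw [dotProduct_comm B.2.1 A.2.1, dotProduct_comm B.2.2.1 A.2.2.1, dotProduct_comm A.2.2.1 B.2.1, dotProduct_comm B.2.2.1 A.2.1]
      ring
end
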